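/- Let R̄ be a commutative ring of characteristic p, which is relatively perfect and finite free over a base via a presentation, and let S̄ be a commutative R̄-algebra with a finite family (s(i))_{i∈I} ∈ W(S̄)^I such that (s(i)_0)_{i∈I} is an R̄-basis of S̄ and S̄ is relatively perfect over R̄. Then (s(i))_{i∈I} is a basis of W(S̄) as a W(R̄)-module: every w ∈ W(S̄) has a unique expansion w = Σ_{i∈I} r(i)·s(i) with r(i) ∈ W(R̄). Moreover, for all u ∈ ℕ, Σ_i r(i) s(i) ∈ V^u(W(S̄)) if and only if r(i) ∈ V^u(W(R̄)) for every i ∈ I. -/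

import Mathlib

open WittVector

/-- The `W(R)`-module structure on `W(S)` induced by the functorial map
`W(R) →+* W(S)` coming from the structure morphism `R → S`. -/
noncomputable instance wittModule (p : ℕ) [Fact p.Prime] (R S : Type*) [CommRing R]
    [CommRing S] [Algebra R S] : Module (WittVector p R) (WittVector p S) :=
  Module.compHom (WittVector p S) (WittVector.map (algebraMap R S))

/-- `R` viewed as an `R`-module through the Frobenius endomorphism `a ↦ aᵖ`. -/
def FrobTwist (p : ℕ) (R : Type*) : Type _ := R

/-- The identity of `R`, viewed as a map `FrobTwist p R → R`. -/
def FrobTwist.val {p : ℕ} {R : Type*} (x : FrobTwist p R) : R := x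

instance (p : ℕ) (R : Type*) [CommRing R] : AddCommGroup (FrobTwist p R) :=
  inferInstanceAs (AddCommGroup R)

noncomputable instance (p : ℕ) [Fact p.Prime] (R : Type*) [CommRing R] [CharP R p] :
    Module R (FrobTwist p R) :=
  Module.compHom (R := R) R (frobenius R p)

/-- The relative Frobenius `S ⊗_{ψ, Frob_R} R → S`, `s ⊗ r ↦ s^p * ψ(r)`. -/
noncomputable def relativeFrobenius (p : ℕ) [Fact p.Prime] (R S : Type*) [CommRing R]
    [CommRing S] [Algebra R S] [CharP R p] [CharP S p] :
    TensorProduct R S (FrobTwist p R) →+ S :=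
  TensorProduct.liftAddHom
    (AddMonoidHom.mk'
      (fun s => AddMonoidHom.mk' (fun r : FrobTwist p R => s ^ p * algebraMap R S r.val)
        (fun r r' => by
          show s ^ p * algebraMap R S (r.val + r'.val) = _
          rw [map_add, mul_add]))
      (fun s t => by
        ext r
        show (s + t) ^ p * algebraMap R S r.val =
          s ^ p * algebraMap R S r.val + t ^ p * algebraMap R S r.val
        haveI : ExpChar S p := ExpChar.prime Fact.out
        rw [add_pow_char, add_mul]))
    (fun a s r => by
      show (a • s) ^ p * algebraMap R S r.val =
        s ^ p * algebraMap R S (frobenius R p a * r.val)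
      rw [Algebra.smul_def, mul_pow, ← map_pow, map_mul, frobenius_def]
      ring)

section WVAux

open WittVector Function

variable {p : ℕ} [Fact p.Prime]

section Single

variable {T : Type*} [CommRing T]

lemma WVAux.iter_versch_coeff_lt (y : WittVector p T) :
    ∀ n k, k < n → ((⇑(verschiebung (p := p) (R := T)))^[n] y).coeff k = 0 := by
  intro n
  induction n with
  | zero => intro k hk; omega
  | succ n ih =>
    intro k hk
    rw [Function.iterate_succ_apply']
    cases k with
    | zero => exact verschiebung_coeff_zero _
    | succ k => rw [verschiebung_coeff_succ]; exact ih k (by omega)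

lemma WVAux.mem_V_iff (n : ℕ) (x : WittVector p T) :
    x ∈ Set.range ((⇑(verschiebung (p := p) (R := T)))^[n]) ↔ ∀ k < n, x.coeff k = 0 := by
  constructor
  · rintro ⟨y, rfl⟩ k hk
    exact WVAux.iter_versch_coeff_lt y n k hk
  · intro h
    refine ⟨WittVector.mk p (fun k => x.coeff (k + n)), ?_⟩
    ext k
    rcases lt_or_ge k n with hk | hk
    · rw [WVAux.iter_versch_coeff_lt _ n k hk, h k hk]
    · obtain ⟨m, rfl⟩ : ∃ m, k = m + n := ⟨k - n, by omega⟩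
      rw [iterate_verschiebung_coeff]
      simp [WittVector.coeff_mk]

lemma WVAux.mem_V_iff_ker (n : ℕ) (x : WittVector p T) :
    x ∈ Set.range ((⇑(verschiebung (p := p) (R := T)))^[n]) ↔
      x ∈ RingHom.ker (WittVector.truncate (p := p) n) := by
  rw [WVAux.mem_V_iff, WittVector.mem_ker_truncate]

lemma WVAux.V_mono {m n : ℕ} (h : m ≤ n) {x : WittVector p T}
    (hx : x ∈ Set.range ((⇑(verschiebung (p := p) (R := T)))^[n])) :
    x ∈ Set.range ((⇑(verschiebung (p := p) (R := T)))^[m]) := by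
  rw [WVAux.mem_V_iff] at hx ⊢
  exact fun k hk => hx k (lt_of_lt_of_le hk h)

lemma WVAux.V_zero_mem (n : ℕ) :
    (0 : WittVector p T) ∈ Set.range ((⇑(verschiebung (p := p) (R := T)))^[n]) :=
  (WVAux.mem_V_iff_ker n 0).2 (zero_mem _)

lemma WVAux.V_sub_mem {n : ℕ} {x y : WittVector p T}
    (hx : x ∈ Set.range ((⇑(verschiebung (p := p) (R := T)))^[n]))
    (hy : y ∈ Set.range ((⇑(verschiebung (p := p) (R := T)))^[n])) :
    x - y ∈ Set.range ((⇑(verschiebung (p := p) (R := T)))^[n]) := by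
  rw [WVAux.mem_V_iff_ker] at hx hy ⊢
  exact sub_mem hx hy

lemma WVAux.V_sum_mem {n : ℕ} {ι : Type*} (t : Finset ι) {f : ι → WittVector p T}
    (hf : ∀ i ∈ t, f i ∈ Set.range ((⇑(verschiebung (p := p) (R := T)))^[n])) :
    (∑ i ∈ t, f i) ∈ Set.range ((⇑(verschiebung (p := p) (R := T)))^[n]) := by
  rw [WVAux.mem_V_iff_ker]
  exact sum_mem fun i hi => (WVAux.mem_V_iff_ker n (f i)).1 (hf i hi)

lemma WVAux.V_mul_mem_right {n : ℕ} {x : WittVector p T}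
    (hx : x ∈ Set.range ((⇑(verschiebung (p := p) (R := T)))^[n])) (y : WittVector p T) :
    x * y ∈ Set.range ((⇑(verschiebung (p := p) (R := T)))^[n]) := by
  obtain ⟨z, rfl⟩ := hx
  exact ⟨z * (frobenius^[n] y), (iterate_verschiebung_mul_left z y n).symm⟩

lemma WVAux.sub_V_iff (n : ℕ) (a b : WittVector p T) :
    a - b ∈ Set.range ((⇑(verschiebung (p := p) (R := T)))^[n]) ↔
      ∀ k < n, a.coeff k = b.coeff k := by
  rw [WVAux.mem_V_iff_ker, RingHom.mem_ker, map_sub, sub_eq_zero]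
  constructor
  · intro h k hk
    have := congrArg (fun z => TruncatedWittVector.coeff (⟨k, hk⟩ : Fin n) z) h
    simpa [WittVector.coeff_truncate] using this
  · intro h
    apply TruncatedWittVector.ext
    rintro ⟨k, hk⟩
    simpa [WittVector.coeff_truncate] using h k hk

lemma WVAux.versch_inj : Function.Injective (⇑(verschiebung (p := p) (R := T))) := by
  intro a b h
  ext k
  have := congrArg (fun z => WittVector.coeff z (k + 1)) h
  simpa [verschiebung_coeff_add_one] using this

lemma WVAux.eq_zero_of_forall_mem {x : WittVector p T}
    (h : ∀ n : ℕ, x ∈ Set.range ((⇑(verschiebung (p := p) (R := T)))^[n])) : x = 0 := by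
  have hx : x ∈ ⨅ n : ℕ, RingHom.ker (WittVector.truncate (p := p) (R := T) n) := by
    rw [Submodule.mem_iInf]
    exact fun n => (WVAux.mem_V_iff_ker n x).1 (h n)
  rw [TruncatedWittVector.iInf_ker_truncate] at hx
  simpa using hx

lemma WVAux.coeff0_sum {ι : Type*} (t : Finset ι) (f : ι → WittVector p T) :
    (∑ i ∈ t, f i).coeff 0 = ∑ i ∈ t, (f i).coeff 0 := by
  exact map_sum (WittVector.constantCoeff (p := p) (R := T)) f t

lemma WVAux.coeff0_sub (x y : WittVector p T) : (x - y).coeff 0 = x.coeff 0 - y.coeff 0 := by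
  exact map_sub (WittVector.constantCoeff (p := p) (R := T)) x y

end Single

lemma WVAux.map_iterate_versch {T U : Type*} [CommRing T] [CommRing U] (f : T →+* U) (n : ℕ)
    (x : WittVector p T) :
    WittVector.map f ((⇑(verschiebung (p := p) (R := T)))^[n] x)
      = (⇑(verschiebung (p := p) (R := U)))^[n] (WittVector.map f x) := by
  induction n with
  | zero => simp
  | succ n ih => rw [Function.iterate_succ_apply', Function.iterate_succ_apply',
      WittVector.map_verschiebung, ih]

end WVAux

section Twist

open WittVector

variable {p : ℕ} [Fact p.Prime] {R S : Type*} [CommRing R] [CommRing S] [Algebra R S]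
  [CharP R p] [CharP S p]

/-- Reinterpret an element of `R` as an element of the Frobenius twist. -/
def WVAux.tw (p : ℕ) {R : Type*} (r : R) : FrobTwist p R := r

lemma WVAux.relFrob_tmul (s : S) (r : FrobTwist p R) :
    relativeFrobenius p R S (s ⊗ₜ[R] r) = s ^ p * algebraMap R S r.val :=
  TensorProduct.liftAddHom_tmul _ _ _ _

example (r : WittVector p R) (w : WittVector p S) :
    r • w = WittVector.map (algebraMap R S) r * w := rfl

lemma WVAux.twist (hRP : Function.Bijective (relativeFrobenius p R S))
    {I : Type*} [Fintype I] (b : I → S)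
    (hli : LinearIndependent R b) (hsp : Submodule.span R (Set.range b) = ⊤) :
    LinearIndependent R (fun i => b i ^ p) ∧
      Submodule.span R (Set.range fun i => b i ^ p) = ⊤ := by
  constructor
  · rw [Fintype.linearIndependent_iff]
    intro c hc
    have h1 : relativeFrobenius p R S (∑ i, b i ⊗ₜ[R] WVAux.tw p (c i)) = 0 := by
      rw [map_sum]
      calc ∑ i, relativeFrobenius p R S (b i ⊗ₜ[R] WVAux.tw p (c i))
          = ∑ i, c i • b i ^ p := by
            refine Finset.sum_congr rfl fun i _ => ?_
            rw [WVAux.relFrob_tmul, Algebra.smul_def, mul_comm]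
            exact rfl
        _ = 0 := hc
    have h2 : (∑ i, b i ⊗ₜ[R] WVAux.tw p (c i)) = 0 :=
      hRP.1 (by rw [h1, map_zero])
    intro j
    classical
    let B : Module.Basis I R S := Module.Basis.mk hli hsp.ge
    let g : TensorProduct R S (FrobTwist p R) →ₗ[R] FrobTwist p R :=
      (TensorProduct.lid R (FrobTwist p R)).toLinearMap ∘ₗ
        LinearMap.rTensor (FrobTwist p R) (B.coord j)
    have h3 : g (∑ i, b i ⊗ₜ[R] WVAux.tw p (c i)) = WVAux.tw p (c j) := by
      rw [map_sum]
      have e1 : ∀ i, g (b i ⊗ₜ[R] WVAux.tw p (c i))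
          = B.coord j (b i) • WVAux.tw p (c i) := by
        intro i
        simp only [g, LinearMap.coe_comp, Function.comp_apply, LinearMap.rTensor_tmul,
          LinearEquiv.coe_coe, TensorProduct.lid_tmul]
      have e2 : ∀ i, B.coord j (b i) • WVAux.tw p (c i)
          = if i = j then WVAux.tw p (c i) else 0 := by
        intro i
        have hb : B.coord j (b i) = if i = j then 1 else 0 := by
          rw [show b i = B i from (Module.Basis.mk_apply hli hsp.ge i).symm, Module.Basis.coord_apply,
            Module.Basis.repr_self, Finsupp.single_apply]
        rw [hb]
        split
        · rw [one_smul]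
        · rw [zero_smul]
      rw [Finset.sum_congr rfl fun i _ => (e1 i).trans (e2 i),
        Finset.sum_ite_eq' Finset.univ j, if_pos (Finset.mem_univ j)]
    rw [h2, map_zero] at h3
    exact h3.symm
  · rw [eq_top_iff]
    rintro t -
    obtain ⟨x, hx⟩ := hRP.2 t
    have key : ∀ y : TensorProduct R S (FrobTwist p R),
        relativeFrobenius p R S y ∈ Submodule.span R (Set.range fun i => b i ^ p) := by
      intro y
      induction y using TensorProduct.induction_on with
      | zero => rw [map_zero]; exact zero_mem _
      | tmul s r =>
        rw [WVAux.relFrob_tmul]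
        have hs : s ∈ Submodule.span R (Set.range b) := by rw [hsp]; trivial
        obtain ⟨a, ha⟩ := (Submodule.mem_span_range_iff_exists_fun R).1 hs
        rw [← ha]
        haveI : ExpChar S p := ExpChar.prime Fact.out
        have e : (∑ i, a i • b i) ^ p * algebraMap R S r.val
            = ∑ i, (a i ^ p * r.val) • (b i ^ p) := by
          rw [sum_pow_char, Finset.sum_mul]
          refine Finset.sum_congr rfl fun i _ => ?_
          rw [smul_pow, Algebra.smul_def, Algebra.smul_def, map_mul, map_pow]
          ring
        rw [e]
        exact Submodule.sum_mem _ fun i _ =>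
          Submodule.smul_mem _ _ (Submodule.subset_span ⟨i, rfl⟩)
      | add x y hx hy => rw [map_add]; exact add_mem hx hy
    rw [← hx]
    exact key x

end Twist

section Claims

open WittVector Function

variable {p : ℕ} [Fact p.Prime] {R S : Type*} [CommRing R] [CommRing S] [Algebra R S]
  [CharP R p] [CharP S p]

lemma WVAux.good_frob (hRP : Function.Bijective (relativeFrobenius p R S))
    {I : Type*} [Fintype I] (s : I → WittVector p S)
    (hli : LinearIndependent R (fun i => (s i).coeff 0))
    (hsp : Submodule.span R (Set.range fun i => (s i).coeff 0) = ⊤) :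
    LinearIndependent R (fun i => ((frobenius (s i)).coeff 0)) ∧
      Submodule.span R (Set.range fun i => (frobenius (s i)).coeff 0) = ⊤ := by
  have e : (fun i => (frobenius (s i)).coeff 0) = fun i => (s i).coeff 0 ^ p := by
    funext i; simp [coeff_frobenius_charP]
  rw [e]
  exact WVAux.twist hRP _ hli hsp

lemma WVAux.claimB (hRP : Function.Bijective (relativeFrobenius p R S)) :
    ∀ (n : ℕ) {I : Type*} [Fintype I] (s : I → WittVector p S),
      LinearIndependent R (fun i => (s i).coeff 0) →
      Submodule.span R (Set.range fun i => (s i).coeff 0) = ⊤ →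
      ∀ r : I → WittVector p R,
        (∑ i, WittVector.map (algebraMap R S) (r i) * s i) ∈
            Set.range ((⇑(verschiebung (p := p) (R := S)))^[n]) →
        ∀ i, r i ∈ Set.range ((⇑(verschiebung (p := p) (R := R)))^[n]) := by
  intro n
  induction n with
  | zero => intro I _ s _ _ r _ i; exact ⟨r i, rfl⟩
  | succ n ih =>
    intro I _ s hli hsp r h i
    have h0 : ∀ j, (r j).coeff 0 = 0 := by
      have hc : (∑ j, WittVector.map (algebraMap R S) (r j) * s j).coeff 0 = 0 :=
        (WVAux.mem_V_iff _ _).1 h 0 (Nat.succ_pos n)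
      rw [WVAux.coeff0_sum] at hc
      have hc' : ∑ j, ((r j).coeff 0) • ((s j).coeff 0) = 0 := by
        rw [← hc]
        refine Finset.sum_congr rfl fun j _ => ?_
        rw [mul_coeff_zero, WittVector.map_coeff, Algebra.smul_def]
      exact Fintype.linearIndependent_iff.1 hli _ hc'
    have ht : ∀ j, ∃ t, r j = verschiebung t := by
      intro j
      obtain ⟨t, htt⟩ := (WVAux.mem_V_iff (T := R) 1 (r j)).2
        (by intro k hk; interval_cases k; exact h0 j)
      exact ⟨t, by simpa using htt.symm⟩
    choose t htv using ht
    have hsum : (∑ j, WittVector.map (algebraMap R S) (r j) * s j)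
        = verschiebung (∑ j, WittVector.map (algebraMap R S) (t j) * frobenius (s j)) := by
      rw [map_sum verschiebung]
      refine Finset.sum_congr rfl fun j _ => ?_
      rw [htv j, WittVector.map_verschiebung, verschiebung_mul_frobenius]
    obtain ⟨y, hy⟩ := h
    rw [hsum] at hy
    have hz : (∑ j, WittVector.map (algebraMap R S) (t j) * frobenius (s j))
        ∈ Set.range ((⇑(verschiebung (p := p) (R := S)))^[n]) := by
      refine ⟨y, WVAux.versch_inj ?_⟩
      rw [← Function.iterate_succ_apply' (⇑(verschiebung (p := p) (R := S))) n y]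
      exact hy
    have hg := WVAux.good_frob hRP s hli hsp
    obtain ⟨z, hzz⟩ := ih (fun j => frobenius (s j)) hg.1 hg.2 t hz i
    refine ⟨z, ?_⟩
    rw [Function.iterate_succ_apply', hzz]
    exact (htv i).symm

lemma WVAux.claimA (hRP : Function.Bijective (relativeFrobenius p R S)) :
    ∀ (n : ℕ) {I : Type*} [Fintype I] (s : I → WittVector p S),
      LinearIndependent R (fun i => (s i).coeff 0) →
      Submodule.span R (Set.range fun i => (s i).coeff 0) = ⊤ →
      ∀ w : WittVector p S, ∃ r : I → WittVector p R,
        (w - ∑ i, WittVector.map (algebraMap R S) (r i) * s i) ∈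
          Set.range ((⇑(verschiebung (p := p) (R := S)))^[n]) := by
  intro n
  induction n with
  | zero =>
    intro I _ s _ _ w
    refine ⟨0, ?_⟩
    rw [WVAux.mem_V_iff]
    intro k hk; omega
  | succ n ih =>
    intro I _ s hli hsp w
    have hw : w.coeff 0 ∈ Submodule.span R (Set.range fun i => (s i).coeff 0) := by
      rw [hsp]; trivial
    obtain ⟨a, ha⟩ := (Submodule.mem_span_range_iff_exists_fun R).1 hw
    have hw0 : (w - ∑ i, WittVector.map (algebraMap R S)
        (teichmuller p (a i)) * s i).coeff 0 = 0 := by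
      rw [WVAux.coeff0_sub, WVAux.coeff0_sum, sub_eq_zero, ← ha]
      refine Finset.sum_congr rfl fun i _ => ?_
      rw [mul_coeff_zero, WittVector.map_coeff, teichmuller_coeff_zero, Algebra.smul_def]
    obtain ⟨x, hx⟩ := (WVAux.mem_V_iff (T := S) 1 _).2
      (by intro k hk; interval_cases k; exact hw0)
    have hVx : verschiebung x
        = w - ∑ i, WittVector.map (algebraMap R S) (teichmuller p (a i)) * s i := by
      simpa using hx
    have hg := WVAux.good_frob hRP s hli hsp
    obtain ⟨t, ht⟩ := ih (fun i => frobenius (s i)) hg.1 hg.2 x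
    obtain ⟨y, hy⟩ := ht
    refine ⟨fun i => teichmuller p (a i) + verschiebung (t i), ⟨y, ?_⟩⟩
    have e1 : ∀ i, WittVector.map (algebraMap R S)
          (teichmuller p (a i) + verschiebung (t i)) * s i
        = WittVector.map (algebraMap R S) (teichmuller p (a i)) * s i
          + verschiebung (WittVector.map (algebraMap R S) (t i) * frobenius (s i)) := by
      intro i
      rw [map_add, add_mul, WittVector.map_verschiebung, verschiebung_mul_frobenius]
    have expand : w - ∑ i, WittVector.map (algebraMap R S)
          (teichmuller p (a i) + verschiebung (t i)) * s i
        = verschiebung (x - ∑ i, WittVector.map (algebraMap R S) (t i) * frobenius (s i)) := by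
      rw [Finset.sum_congr rfl fun i _ => e1 i, Finset.sum_add_distrib,
        AddMonoidHom.map_sub (verschiebung (p := p) (R := S)), map_sum verschiebung, hVx]
      ring
    rw [expand, ← hy]
    exact Function.iterate_succ_apply' _ _ _

lemma WVAux.sum_map_sub {I : Type*} [Fintype I] (f g : I → WittVector p R)
    (s : I → WittVector p S) :
    (∑ j, WittVector.map (algebraMap R S) (f j - g j) * s j)
      = (∑ j, WittVector.map (algebraMap R S) (f j) * s j)
        - ∑ j, WittVector.map (algebraMap R S) (g j) * s j := by
  rw [← Finset.sum_sub_distrib]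
  exact Finset.sum_congr rfl fun j _ => by
    rw [map_sub (WittVector.map (algebraMap R S)), sub_mul]

end Claims

/-- if `S̄` is relatively perfect over `R̄` and `(s i)` is a finite family
in `W(S̄)` whose zeroth coordinates form an `R̄`-basis of `S̄`, then `(s i)` is a basis
of `W(S̄)` as a `W(R̄)`-module (every Witt vector has a unique expansion
`w = Σ r i • s i`), and moreover `Σ r i • s i ∈ V^u(W(S̄))` if and only if each
`r i ∈ V^u(W(R̄))`. -/
theorem wittVectors_basis_of_relativelyPerfect (p : ℕ) [Fact p.Prime] (R S : Type*)
    [CommRing R] [CommRing S] [Algebra R S] [CharP R p] [CharP S p]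
    {I : Type*} [Fintype I] (s : I → WittVector p S)
    (hRP : Function.Bijective (relativeFrobenius p R S))
    (hli0 : LinearIndependent R (fun i => (s i).coeff 0))
    (hgen0 : Submodule.span R (Set.range fun i => (s i).coeff 0) = ⊤) :
    (∀ w : WittVector p S, ∃! r : I → WittVector p R,
        w = ∑ i : I, r i • s i) ∧
    (∀ (u : ℕ) (r : I → WittVector p R),
        (∑ i : I, r i • s i) ∈ Set.range ((⇑(verschiebung (p := p) (R := S)))^[u]) ↔
        ∀ i : I, r i ∈ Set.range ((⇑(verschiebung (p := p) (R := R)))^[u])) := by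
  have smul_eq : ∀ (r : WittVector p R) (w : WittVector p S),
      r • w = WittVector.map (algebraMap R S) r * w := fun _ _ => rfl
  constructor
  · intro w
    choose rseq hrseq using fun n => WVAux.claimA hRP n s hli0 hgen0 w
    have stab : ∀ m n k, k < m → k < n → ∀ i, (rseq m i).coeff k = (rseq n i).coeff k := by
      intro m n k hm hn i
      have e : (∑ j, WittVector.map (algebraMap R S) (rseq m j - rseq n j) * s j)
          = (w - ∑ j, WittVector.map (algebraMap R S) (rseq n j) * s j)
            - (w - ∑ j, WittVector.map (algebraMap R S) (rseq m j) * s j) := by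
        rw [WVAux.sum_map_sub]
        ring
      have hmem : (∑ j, WittVector.map (algebraMap R S) (rseq m j - rseq n j) * s j)
          ∈ Set.range ((⇑(verschiebung (p := p) (R := S)))^[min m n]) := by
        rw [e]
        exact WVAux.V_sub_mem (WVAux.V_mono (min_le_right m n) (hrseq n))
          (WVAux.V_mono (min_le_left m n) (hrseq m))
      have hmem' := WVAux.claimB hRP (min m n) s hli0 hgen0
        (fun j => rseq m j - rseq n j) hmem i
      exact (WVAux.sub_V_iff (min m n) _ _).1 hmem' k (lt_min hm hn)
    set rl : I → WittVector p R := fun i => WittVector.mk p (fun k => (rseq (k + 1) i).coeff k)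
      with hrl
    have hcoe : ∀ n k, k < n → ∀ i, (rl i).coeff k = (rseq n i).coeff k := by
      intro n k hk i
      have : (rl i).coeff k = (rseq (k + 1) i).coeff k := by
        rw [hrl]; simp [WittVector.coeff_mk]
      rw [this]
      exact stab (k + 1) n k (Nat.lt_succ_self k) hk i
    have hdiff : ∀ n i, rl i - rseq n i
        ∈ Set.range ((⇑(verschiebung (p := p) (R := R)))^[n]) :=
      fun n i => (WVAux.sub_V_iff n _ _).2 fun k hk => hcoe n k hk i
    have hfinal : ∀ n, (w - ∑ i, WittVector.map (algebraMap R S) (rl i) * s i)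
        ∈ Set.range ((⇑(verschiebung (p := p) (R := S)))^[n]) := by
      intro n
      have e : w - ∑ i, WittVector.map (algebraMap R S) (rl i) * s i
          = (w - ∑ i, WittVector.map (algebraMap R S) (rseq n i) * s i)
            - ∑ i, WittVector.map (algebraMap R S) (rl i - rseq n i) * s i := by
        rw [WVAux.sum_map_sub]
        ring
      rw [e]
      refine WVAux.V_sub_mem (hrseq n) (WVAux.V_sum_mem _ fun i _ => ?_)
      obtain ⟨z, hz⟩ := hdiff n i
      refine WVAux.V_mul_mem_right ⟨WittVector.map (algebraMap R S) z, ?_⟩ (s i)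
      rw [← WVAux.map_iterate_versch, hz]
    have hzero : w - ∑ i, WittVector.map (algebraMap R S) (rl i) * s i = 0 :=
      WVAux.eq_zero_of_forall_mem hfinal
    refine ⟨rl, ?_, ?_⟩
    · simp only [smul_eq]
      exact sub_eq_zero.1 hzero
    · intro r' h'
      have hw' : w = ∑ i, WittVector.map (algebraMap R S) (r' i) * s i := by
        simpa only [smul_eq] using h'
      funext i
      have hmemall : ∀ n, (r' i - rl i)
          ∈ Set.range ((⇑(verschiebung (p := p) (R := R)))^[n]) := by
        intro n
        have hz : (∑ j, WittVector.map (algebraMap R S) (r' j - rl j) * s j) = 0 := by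
          rw [WVAux.sum_map_sub, ← hw', sub_eq_zero]
          exact sub_eq_zero.1 hzero
        refine WVAux.claimB hRP n s hli0 hgen0 (fun j => r' j - rl j) ?_ i
        rw [hz]
        exact WVAux.V_zero_mem n
      have : r' i - rl i = 0 := WVAux.eq_zero_of_forall_mem hmemall
      exact sub_eq_zero.1 this
  · intro u r
    constructor
    · intro h i
      refine WVAux.claimB hRP u s hli0 hgen0 r ?_ i
      simpa only [smul_eq] using h
    · intro h
      simp only [smul_eq]
      refine WVAux.V_sum_mem _ fun i _ => ?_
      obtain ⟨t, ht⟩ := h i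
      refine WVAux.V_mul_mem_right ⟨WittVector.map (algebraMap R S) t, ?_⟩ (s i)
      rw [← WVAux.map_iterate_versch, ht]
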